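/- For the exponential distribution with rate 1/β, the sequence v_{n+1} = v_n + β e^{-v_n/β} (with v_0 ≥ 0) satisfies v_n = β log n + o(log n); more precisely, e^{v_n/β}/n → 1 as n → ∞. -/

import Mathlib

open Filter Real Finset

lemma exp_le_quadratic {x : ℝ} (h0 : 0 ≤ x) (h1 : x ≤ 1) :
    Real.exp x ≤ 1 + x + x ^ 2 := by
  have h := Real.exp_bound' h0 h1 (n := 2) (by norm_num)
  simp [Finset.sum_range_succ] at h
  nlinarith [sq_nonneg x]

/-- For the exponential distribution, `v_{n+1} = v_n + β e^{-v_n/β}` with `v_0 ≥ 0`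
satisfies `e^{v_n/β}/n → 1` as `n → ∞`. -/
theorem stmt_2 (β : ℝ) (hβ : 0 < β) (v : ℕ → ℝ) (hv0 : 0 ≤ v 0)
    (hrec : ∀ n, v (n + 1) = v n + β * Real.exp (-(v n) / β)) :
    Tendsto (fun n : ℕ => Real.exp (v n / β) / n) atTop (nhds 1) := by
  set u : ℕ → ℝ := fun n => Real.exp (v n / β) with hu
  have hustep : ∀ n, u (n + 1) = u n * Real.exp (1 / u n) := by
    intro n
    have : v (n + 1) / β = v n / β + Real.exp (-(v n) / β) := by
      rw [hrec n]; field_simp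
    simp only [hu, this, Real.exp_add]
    congr 1
    rw [neg_div, Real.exp_neg, one_div]
  have hupos : ∀ n, 0 < u n := fun n => Real.exp_pos _
  -- lower bound : u n ≥ n + 1
  have hlow : ∀ n : ℕ, (n : ℝ) + 1 ≤ u n := by
    intro n
    induction n with
    | zero =>
      show ((0:ℕ):ℝ) + 1 ≤ u 0
      rw [Nat.cast_zero]
      rw [zero_add]
      exact Real.one_le_exp (div_nonneg hv0 hβ.le)
    | succ n ih =>
      have h1 : u n + 1 ≤ u n * Real.exp (1 / u n) := by
        have := Real.add_one_le_exp (1 / u n)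
        calc u n + 1 = u n * (1 + 1 / u n) := by rw [mul_add, mul_one, mul_one_div_cancel (hupos n).ne']
          _ ≤ u n * Real.exp (1 / u n) :=
            mul_le_mul_of_nonneg_left (by linarith) (hupos n).le
      rw [hustep n]
      push_cast
      linarith
  -- upper bound step : u (n+1) ≤ u n + 1 + 1/(n+1)
  have hstep : ∀ n : ℕ, u (n + 1) ≤ u n + 1 + 1 / ((n : ℝ) + 1) := by
    intro n
    have hun : (n : ℝ) + 1 ≤ u n := hlow n
    have hun1 : (1 : ℝ) ≤ u n := by
      have : (0:ℝ) ≤ n := Nat.cast_nonneg n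
      linarith
    have hx0 : 0 ≤ 1 / u n := by positivity
    have hx1 : 1 / u n ≤ 1 := by
      rw [div_le_one (hupos n)]; exact hun1
    have h2 : Real.exp (1 / u n) ≤ 1 + 1 / u n + (1 / u n) ^ 2 := exp_le_quadratic hx0 hx1
    have h3 : u n * Real.exp (1 / u n) ≤ u n + 1 + 1 / u n := by
      have := mul_le_mul_of_nonneg_left h2 (hupos n).le
      have heq : u n * (1 + 1 / u n + (1 / u n) ^ 2) = u n + 1 + 1 / u n := by
        field_simp
      linarith [heq ▸ this]
    have h4 : 1 / u n ≤ 1 / ((n : ℝ) + 1) :=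
      one_div_le_one_div_of_le (by positivity) hun
    rw [hustep n]; linarith
  -- upper bound : u n ≤ u 0 + n + ∑_{k<n} 1/(k+1)
  have hupper : ∀ n : ℕ, u n ≤ u 0 + n + ∑ k ∈ range n, 1 / ((k : ℝ) + 1) := by
    intro n
    induction n with
    | zero => simp
    | succ n ih =>
      have := hstep n
      rw [Finset.sum_range_succ]
      push_cast
      linarith
  -- squeeze
  have hlim_low : Tendsto (fun n : ℕ => ((n : ℝ) + 1) / n) atTop (nhds 1) := by
    have : (fun n : ℕ => ((n : ℝ) + 1) / n) =ᶠ[atTop] fun n : ℕ => 1 + 1 / n := by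
      filter_upwards [eventually_gt_atTop 0] with n hn
      have : (n : ℝ) ≠ 0 := by positivity
      field_simp
    rw [tendsto_congr' this]
    have := tendsto_one_div_atTop_nhds_zero_nat (𝕜 := ℝ)
    simpa using tendsto_const_nhds.add this
  have hcesaro : Tendsto (fun n : ℕ => ((n : ℝ))⁻¹ * ∑ k ∈ range n, 1 / ((k : ℝ) + 1))
      atTop (nhds 0) := by
    apply Filter.Tendsto.cesaro
    have : Tendsto (fun k : ℕ => ((k : ℝ) + 1)) atTop atTop :=
      tendsto_atTop_add_const_right atTop 1 tendsto_natCast_atTop_atTop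
    simpa [Pi.inv_def] using this.inv_tendsto_atTop
  have hlim_up : Tendsto (fun n : ℕ => (u 0 + n + ∑ k ∈ range n, 1 / ((k : ℝ) + 1)) / n)
      atTop (nhds 1) := by
    have h1 : Tendsto (fun n : ℕ => u 0 / n) atTop (nhds 0) := by
      simpa using tendsto_const_nhds.div_atTop (tendsto_natCast_atTop_atTop (R := ℝ))
    have h2 : Tendsto (fun n : ℕ => (n : ℝ) / n) atTop (nhds 1) := by
      have : (fun n : ℕ => (n : ℝ) / n) =ᶠ[atTop] fun _ : ℕ => (1 : ℝ) := by
        filter_upwards [eventually_gt_atTop 0] with n hn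
        have : (n : ℝ) ≠ 0 := by positivity
        field_simp
      rw [tendsto_congr' this]; exact tendsto_const_nhds
    have h3 : Tendsto (fun n : ℕ => (∑ k ∈ range n, 1 / ((k : ℝ) + 1)) / n)
        atTop (nhds 0) := by
      have : (fun n : ℕ => (∑ k ∈ range n, 1 / ((k : ℝ) + 1)) / n)
          = fun n : ℕ => ((n : ℝ))⁻¹ * ∑ k ∈ range n, 1 / ((k : ℝ) + 1) := by
        funext n; rw [div_eq_inv_mul]
      rw [this]; exact hcesaro
    have := (h1.add h2).add h3
    simp only [zero_add, add_zero] at this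
    convert this using 2 with n
    ring
  refine tendsto_of_tendsto_of_tendsto_of_le_of_le' hlim_low hlim_up ?_ ?_
  · filter_upwards [eventually_gt_atTop 0] with n hn
    exact div_le_div_of_nonneg_right (hlow n) (by positivity)
  · filter_upwards [eventually_gt_atTop 0] with n hn
    exact div_le_div_of_nonneg_right (hupper n) (by positivity)
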